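/- arXiv:2010.15743 — 3 statements merged into one kernel-verified Lean document; each statement's English description precedes it below -/
import Mathlib

section
/- Let H = D_{2m} be a dihedral group with m even, m ≥ 4, with central involution z, and suppose r0, r2, ρ0, ρ2 are four distinct involutions generating H with r0 r2 = ρ0 ρ2 = z. If z ∈ ⟨r0, ρ0⟩ then H = ⟨r0, ρ0⟩ and the order of r0 ρ0 equals m. -/
open DihedralGroup

/-- Membership predicate: rotations in `A`, reflections offset by `i` in `A`. -/
def dihMem {m : ℕ} (i : ZMod m) (A : AddSubgroup (ZMod m)) : DihedralGroup m → Prop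
  | DihedralGroup.r a => a ∈ A
  | DihedralGroup.sr b => b - i ∈ A

/-- The subgroup of `DihedralGroup m` with rotations in `A` and reflections offset `i` in `A`. -/
def dihS {m : ℕ} (i : ZMod m) (A : AddSubgroup (ZMod m)) : Subgroup (DihedralGroup m) where
  carrier := {x | dihMem i A x}
  one_mem' := by
    show dihMem i A (DihedralGroup.r 0)
    exact A.zero_mem
  mul_mem' := by
    rintro (a | a) (b | b) ha hb <;>
      simp only [Set.mem_setOf_eq, dihMem, r_mul_r, r_mul_sr, sr_mul_r, sr_mul_sr] at *
    · exact A.add_mem ha hb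
    · have : b - a - i = (b - i) - a := by ring
      rw [this]; exact A.sub_mem hb ha
    · have : a + b - i = (a - i) + b := by ring
      rw [this]; exact A.add_mem ha hb
    · have : b - a = (b - i) - (a - i) := by ring
      rw [this]; exact A.sub_mem hb ha
  inv_mem' := by
    rintro (a | a) ha <;>
      simp only [Set.mem_setOf_eq, dihMem] at *
    · have : (DihedralGroup.r a)⁻¹ = DihedralGroup.r (-a) := by
        apply inv_eq_of_mul_eq_one_right; rw [r_mul_r, add_neg_cancel]; rfl
      rw [this]; exact A.neg_mem ha
    · have : (DihedralGroup.sr a)⁻¹ = DihedralGroup.sr a := by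
        apply inv_eq_of_mul_eq_one_right; exact sr_mul_self a
      rw [this]; exact ha

lemma two_torsion_zmod {m : ℕ} (hm : Even m) (hm4 : 4 ≤ m) {x : ZMod m}
    (hx : x + x = 0) : x = 0 ∨ x = ((m / 2 : ℕ) : ZMod m) := by
  haveI : NeZero m := ⟨by omega⟩
  have hv : ((x.val + x.val : ℕ) : ZMod m) = 0 := by
    push_cast
    rw [ZMod.natCast_val, ZMod.cast_id, hx]
  rw [ZMod.natCast_eq_zero_iff] at hv
  have hlt : x.val < m := ZMod.val_lt x
  have : x.val + x.val = 0 ∨ x.val + x.val = m := by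
    rcases hv with ⟨c, hc⟩
    have hc2 : c < 2 := by nlinarith
    interval_cases c <;> omega
  obtain ⟨t, ht⟩ := hm
  have hx' : x = ((x.val : ℕ) : ZMod m) := by
    rw [ZMod.natCast_val, ZMod.cast_id]
  rcases this with h | h
  · left
    have h0 : x.val = 0 := by omega
    rw [hx', h0, Nat.cast_zero]
  · right; rw [hx']; congr 1; omega

/-- In D_{2m} (m even, m ≥ 4) with central involution z, if r0, r2, ρ0, ρ2 are
distinct generating involutions with r0 r2 = ρ0 ρ2 = z, and z ∈ ⟨r0, ρ0⟩, then
⟨r0, ρ0⟩ = D_{2m} and orderOf (r0 ρ0) = m. -/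
theorem stmt11 (m : ℕ) (hm : Even m) (hm4 : 4 ≤ m)
    (z r0 r2 ρ0 ρ2 : DihedralGroup m)
    (hzc : z ∈ Subgroup.center (DihedralGroup m)) (hz2 : orderOf z = 2)
    (h0 : orderOf r0 = 2) (h2 : orderOf r2 = 2)
    (hp0 : orderOf ρ0 = 2) (hp2 : orderOf ρ2 = 2)
    (hd : [r0, r2, ρ0, ρ2].Pairwise (· ≠ ·))
    (hgen : Subgroup.closure ({r0, r2, ρ0, ρ2} : Set (DihedralGroup m)) = ⊤)
    (hr : r0 * r2 = z) (hρ : ρ0 * ρ2 = z)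
    (hz : z ∈ Subgroup.closure ({r0, ρ0} : Set (DihedralGroup m))) :
    Subgroup.closure ({r0, ρ0} : Set (DihedralGroup m)) = ⊤ ∧
      orderOf (r0 * ρ0) = m := by
  haveI : NeZero m := ⟨by omega⟩
  set G := Subgroup.closure ({r0, ρ0} : Set (DihedralGroup m)) with hG
  have hr0G : r0 ∈ G := Subgroup.subset_closure (by simp)
  have hρ0G : ρ0 ∈ G := Subgroup.subset_closure (by simp)
  -- involution squares
  have sq : ∀ x : DihedralGroup m, orderOf x = 2 → x * x = 1 := by
    intro x hx
    have := pow_orderOf_eq_one x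
    rwa [hx, pow_two] at this
  have ne1 : ∀ x : DihedralGroup m, orderOf x = 2 → x ≠ 1 := by
    intro x hx h1
    rw [h1, orderOf_one] at hx; omega
  -- Part 1
  have hGtop : G = ⊤ := by
    have hr2 : r2 = r0 * z := by
      have := sq r0 h0
      rw [← hr, ← mul_assoc, this, one_mul]
    have hρ2 : ρ2 = ρ0 * z := by
      have := sq ρ0 hp0
      rw [← hρ, ← mul_assoc, this, one_mul]
    rw [eq_top_iff, ← hgen, Subgroup.closure_le]
    intro x hx
    simp only [Set.mem_insert_iff, Set.mem_singleton_iff] at hx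
    rcases hx with rfl | rfl | rfl | rfl
    · exact hr0G
    · rw [hr2]; exact G.mul_mem hr0G hz
    · exact hρ0G
    · rw [hρ2]; exact G.mul_mem hρ0G hz
  refine ⟨hGtop, ?_⟩
  -- z is the central rotation
  obtain ⟨c, rfl⟩ | ⟨c, rfl⟩ : (∃ c, z = DihedralGroup.r c) ∨ ∃ c, z = DihedralGroup.sr c := by
    cases z with
    | r c => exact Or.inl ⟨c, rfl⟩
    | sr c => exact Or.inr ⟨c, rfl⟩
  swap
  · exfalso
    rw [Subgroup.mem_center_iff] at hzc
    have h1 := hzc (DihedralGroup.r 1)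
    rw [r_mul_sr, sr_mul_r] at h1
    have hcc : c - 1 = c + 1 := by injection h1
    have h20 : ((2:ℕ) : ZMod m) = 0 := by push_cast; linear_combination -hcc
    rw [ZMod.natCast_eq_zero_iff] at h20
    have := Nat.le_of_dvd (by norm_num) h20
    omega
  -- c is the unique nonzero 2-torsion element
  have hcc : c + c = 0 := by
    have := sq _ hz2
    rw [r_mul_r, one_def] at this
    injection this
  have hcne : c ≠ 0 := by
    intro h
    exact ne1 _ hz2 (by rw [h]; rfl)
  have hc : c = ((m / 2 : ℕ) : ZMod m) := (two_torsion_zmod hm hm4 hcc).resolve_left hcne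
  -- r0 and ρ0 are reflections
  have refl_case : ∀ x y : DihedralGroup m, orderOf x = 2 → orderOf y = 2 →
      x * y = DihedralGroup.r c → ∃ a, x = DihedralGroup.sr a := by
    intro x y hx hy hxy
    cases x with
    | sr a => exact ⟨a, rfl⟩
    | r a =>
      exfalso
      have haa : a + a = 0 := by
        have := sq _ hx
        rw [r_mul_r, one_def] at this
        injection this
      have hane : a ≠ 0 := by
        intro h
        exact ne1 _ hx (by rw [h]; rfl)
      have ha : a = c := by
        rw [hc]
        exact (two_torsion_zmod hm hm4 haa).resolve_left hane
      have : y = 1 := by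
        have : (DihedralGroup.r a)⁻¹ * (DihedralGroup.r a * y)
            = (DihedralGroup.r a)⁻¹ * DihedralGroup.r c := by rw [hxy]
        rw [inv_mul_cancel_left, ha, inv_mul_cancel] at this
        exact this
      exact ne1 _ hy this
  obtain ⟨i, rfl⟩ := refl_case r0 r2 h0 h2 hr
  obtain ⟨j, rfl⟩ := refl_case ρ0 ρ2 hp0 hp2 hρ
  -- now r0 * ρ0 = r (j - i); show j - i is a unit
  set k := j - i with hk
  set A := AddSubgroup.zmultiples k with hA
  have hclos : G ≤ dihS i A := by
    rw [hG, Subgroup.closure_le]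
    intro x hx
    simp only [Set.mem_insert_iff, Set.mem_singleton_iff] at hx
    rcases hx with rfl | rfl
    · show dihMem i A (DihedralGroup.sr i)
      show i - i ∈ A
      rw [sub_self]; exact A.zero_mem
    · show dihMem i A (DihedralGroup.sr j)
      show j - i ∈ A
      exact AddSubgroup.mem_zmultiples k
  have h1A : (1 : ZMod m) ∈ A := by
    have : DihedralGroup.r 1 ∈ dihS i A := hclos (hGtop ▸ Subgroup.mem_top _)
    exact this
  obtain ⟨t, ht⟩ := h1A
  have hunit : IsUnit k := by
    refine IsUnit.of_mul_eq_one (a := k) ((t : ZMod m)) ?_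
    rw [mul_comm]
    rw [← ht]
    simp [zsmul_eq_mul]
  have hcop : Nat.gcd m k.val = 1 := by
    have hk' : ((k.val : ℕ) : ZMod m) = k := by rw [ZMod.natCast_val, ZMod.cast_id]
    rw [← hk'] at hunit
    have := (ZMod.isUnit_iff_coprime k.val m).mp hunit
    rw [Nat.coprime_comm] at this
    exact this
  rw [sr_mul_sr, DihedralGroup.orderOf_r, hcop, Nat.div_one]
end

section
/- Let H = D_{2m} with m even and z its central involution. If r0, ρ0 are involutions with z ∉ ⟨r0, ρ0⟩ and H = ⟨r0, ρ0, z⟩, then H ≅ ⟨r0, ρ0⟩ × ⟨z⟩, and the order of r0 ρ0 (which equals m/2) is odd. -/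
namespace Stmt12Aux

lemma r_pow {m : ℕ} (x : ZMod m) (k : ℕ) :
    (DihedralGroup.r x) ^ k = DihedralGroup.r (k • x) := by
  induction k with
  | zero => simp
  | succ k ih => rw [pow_succ, ih, DihedralGroup.r_mul_r, succ_nsmul]

lemma r_inv {m : ℕ} (x : ZMod m) : (DihedralGroup.r x)⁻¹ = DihedralGroup.r (-x) :=
  inv_eq_of_mul_eq_one_right
    (by rw [DihedralGroup.r_mul_r, add_neg_cancel, DihedralGroup.one_def])

lemma r_zpow {m : ℕ} (x : ZMod m) (k : ℤ) :
    (DihedralGroup.r x) ^ k = DihedralGroup.r (k • x) := by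
  cases k with
  | ofNat k => simpa using r_pow x k
  | negSucc k =>
      rw [zpow_negSucc, r_pow, r_inv]
      congr 1
      rw [negSucc_zsmul]

/-- The subgroup of the dihedral group determined by an additive subgroup `A`
of rotations and a base reflection offset `i0`. -/
def S {m : ℕ} (A : AddSubgroup (ZMod m)) (i0 : ZMod m) : Subgroup (DihedralGroup m) where
  carrier := {x | (∃ u ∈ A, x = DihedralGroup.r u) ∨ (∃ u ∈ A, x = DihedralGroup.sr (i0 + u))}
  one_mem' := Or.inl ⟨0, A.zero_mem, DihedralGroup.one_def⟩
  mul_mem' := by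
    rintro x y (⟨u, hu, rfl⟩ | ⟨u, hu, rfl⟩) (⟨v, hv, rfl⟩ | ⟨v, hv, rfl⟩)
    · exact Or.inl ⟨u + v, A.add_mem hu hv, by rw [DihedralGroup.r_mul_r]⟩
    · exact Or.inr ⟨v - u, A.sub_mem hv hu, by rw [DihedralGroup.r_mul_sr]; congr 1; ring⟩
    · exact Or.inr ⟨u + v, A.add_mem hu hv, by rw [DihedralGroup.sr_mul_r]; congr 1; ring⟩
    · exact Or.inl ⟨v - u, A.sub_mem hv hu, by rw [DihedralGroup.sr_mul_sr]; congr 1; ring⟩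
  inv_mem' := by
    rintro x (⟨u, hu, rfl⟩ | ⟨u, hu, rfl⟩)
    · exact Or.inl ⟨-u, A.neg_mem hu, r_inv u⟩
    · exact Or.inr ⟨u, hu, inv_eq_of_mul_eq_one_right (DihedralGroup.sr_mul_self _)⟩

lemma mem_S {m : ℕ} {A : AddSubgroup (ZMod m)} {i0 : ZMod m} {x : DihedralGroup m} :
    x ∈ S A i0 ↔
      (∃ u ∈ A, x = DihedralGroup.r u) ∨ (∃ u ∈ A, x = DihedralGroup.sr (i0 + u)) :=
  Iff.rfl

/-- The homomorphism from a smaller dihedral group determined by an additive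
homomorphism on rotation parts and a base reflection offset. -/
def psi {m k : ℕ} (α : ZMod k →+ ZMod m) (i0 : ZMod m) :
    DihedralGroup k →* DihedralGroup m where
  toFun := fun x => match x with
    | DihedralGroup.r t => DihedralGroup.r (α t)
    | DihedralGroup.sr t => DihedralGroup.sr (i0 + α t)
  map_one' := by
    show DihedralGroup.r (α 0) = 1
    rw [map_zero, DihedralGroup.one_def]
  map_mul' := by
    rintro (t | t) (u | u)
    · show DihedralGroup.r (α (t + u)) = DihedralGroup.r (α t) * DihedralGroup.r (α u)
      rw [map_add, DihedralGroup.r_mul_r]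
    · show DihedralGroup.sr (i0 + α (u - t)) =
        DihedralGroup.r (α t) * DihedralGroup.sr (i0 + α u)
      rw [map_sub, DihedralGroup.r_mul_sr]; congr 1; ring
    · show DihedralGroup.sr (i0 + α (t + u)) =
        DihedralGroup.sr (i0 + α t) * DihedralGroup.r (α u)
      rw [map_add, DihedralGroup.sr_mul_r]; congr 1; ring
    · show DihedralGroup.r (α (u - t)) =
        DihedralGroup.sr (i0 + α t) * DihedralGroup.sr (i0 + α u)
      rw [map_sub, DihedralGroup.sr_mul_sr]; congr 1; ring

lemma psi_r {m k : ℕ} (α : ZMod k →+ ZMod m) (i0 : ZMod m) (t : ZMod k) :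
    psi α i0 (DihedralGroup.r t) = DihedralGroup.r (α t) := rfl

lemma psi_sr {m k : ℕ} (α : ZMod k →+ ZMod m) (i0 : ZMod m) (t : ZMod k) :
    psi α i0 (DihedralGroup.sr t) = DihedralGroup.sr (i0 + α t) := rfl

end Stmt12Aux

open Stmt12Aux

/-- In D_{2m} (m even) with unique central involution z, if r0, ρ0 are
involutions with z ∉ D := ⟨r0, ρ0⟩ and ⟨r0, ρ0, z⟩ = D_{2m}, then
D_{2m} ≅ D × ⟨z⟩, D is dihedral of order m, and orderOf (r0 ρ0) = m/2 is odd. -/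
theorem stmt12 (m : ℕ) (hm : Even m)
    (z r0 ρ0 : DihedralGroup m)
    (hzc : z ∈ Subgroup.center (DihedralGroup m)) (hz2 : orderOf z = 2)
    (huniq : ∀ w : DihedralGroup m,
      w ∈ Subgroup.center (DihedralGroup m) → orderOf w = 2 → w = z)
    (h0 : orderOf r0 = 2) (hp0 : orderOf ρ0 = 2)
    (hznotin : z ∉ Subgroup.closure ({r0, ρ0} : Set (DihedralGroup m)))
    (hgen : Subgroup.closure ({r0, ρ0, z} : Set (DihedralGroup m)) = ⊤) :
    Nonempty (DihedralGroup m ≃*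
        (↥(Subgroup.closure ({r0, ρ0} : Set (DihedralGroup m))) ×
          ↥(Subgroup.closure ({z} : Set (DihedralGroup m))))) ∧
      Nat.card ↥(Subgroup.closure ({r0, ρ0} : Set (DihedralGroup m))) = m ∧
      Nonempty (↥(Subgroup.closure ({r0, ρ0} : Set (DihedralGroup m))) ≃*
        DihedralGroup (m / 2)) ∧
      orderOf (r0 * ρ0) = m / 2 ∧ Odd (m / 2) := by
  classical
  obtain c | c := z
  · -- z = r c
    have hcc : c + c = 0 := by
      have h := Subgroup.mem_center_iff.mp hzc (DihedralGroup.sr 0)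
      rw [DihedralGroup.sr_mul_r, DihedralGroup.r_mul_sr] at h
      have h2 : (0 : ZMod m) + c = 0 - c := by injection h
      linear_combination h2
    have hc0 : c ≠ 0 := by
      rintro rfl
      rw [← DihedralGroup.one_def, orderOf_one] at hz2
      exact absurd hz2 (by norm_num)
    have hm0 : m ≠ 0 := by
      rintro rfl
      haveI : NoZeroDivisors (ZMod 0) := inferInstanceAs (NoZeroDivisors ℤ)
      exact hc0 (add_self_eq_zero.mp hcc)
    haveI : NeZero m := ⟨hm0⟩
    have hm2dvd : 2 ∣ m := hm.two_dvd
    have hmge2 : 2 ≤ m := by omega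
    haveI : NeZero (m / 2) := ⟨by omega⟩
    -- rotations of order two are central, hence equal to z
    have hrcentral : ∀ x : ZMod m, x + x = 0 →
        DihedralGroup.r x ∈ Subgroup.center (DihedralGroup m) := by
      intro x hx
      rw [Subgroup.mem_center_iff]
      rintro (y | y)
      · rw [DihedralGroup.r_mul_r, DihedralGroup.r_mul_r, add_comm]
      · rw [DihedralGroup.sr_mul_r, DihedralGroup.r_mul_sr]
        congr 1
        linear_combination hx
    have hrefl : ∀ x : ZMod m, orderOf (DihedralGroup.r x) = 2 →
        DihedralGroup.r x = DihedralGroup.r c := by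
      intro x hx
      have h := pow_orderOf_eq_one (DihedralGroup.r x)
      rw [hx, r_pow, DihedralGroup.one_def] at h
      have h2 : (2 : ℕ) • x = 0 := by injection h
      rw [two_nsmul] at h2
      exact huniq _ (hrcentral x h2) hx
    -- r0 and ρ0 are reflections
    obtain i0 | i0 := r0
    · rw [← hrefl i0 h0] at hznotin
      exact absurd (Subgroup.subset_closure (by simp)) hznotin
    obtain j0 | j0 := ρ0
    · rw [← hrefl j0 hp0] at hznotin
      exact absurd (Subgroup.subset_closure (by simp)) hznotin
    set a : ZMod m := j0 - i0 with ha
    have hra : DihedralGroup.sr i0 * DihedralGroup.sr j0 = DihedralGroup.r a := by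
      rw [DihedralGroup.sr_mul_sr]
    have hrmem : DihedralGroup.r a ∈
        Subgroup.closure ({DihedralGroup.sr i0, DihedralGroup.sr j0} : Set (DihedralGroup m)) := by
      rw [← hra]
      exact mul_mem (Subgroup.subset_closure (by simp)) (Subgroup.subset_closure (by simp))
    have hrmem' : ∀ u : ZMod m, u ∈ AddSubgroup.zmultiples a →
        DihedralGroup.r u ∈
          Subgroup.closure ({DihedralGroup.sr i0, DihedralGroup.sr j0} :
            Set (DihedralGroup m)) := by
      intro u hu
      obtain ⟨k, hk⟩ := AddSubgroup.mem_zmultiples_iff.mp hu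
      rw [← hk, ← r_zpow]
      exact zpow_mem hrmem k
    have hcA0 : c ∉ AddSubgroup.zmultiples a := fun h => hznotin (hrmem' c h)
    -- from hgen : 1 is generated by a and c
    have hsub : Subgroup.closure
        ({DihedralGroup.sr i0, DihedralGroup.sr j0, DihedralGroup.r c} :
          Set (DihedralGroup m)) ≤ S (AddSubgroup.closure {a, c}) i0 := by
      rw [Subgroup.closure_le]
      intro x hx
      simp only [Set.mem_insert_iff, Set.mem_singleton_iff] at hx
      rcases hx with rfl | rfl | rfl
      · exact Or.inr ⟨0, zero_mem _, by rw [add_zero]⟩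
      · exact Or.inr ⟨a, AddSubgroup.subset_closure (by simp), by congr 1; ring⟩
      · exact Or.inl ⟨c, AddSubgroup.subset_closure (by simp), rfl⟩
    have h1A : (1 : ZMod m) ∈ AddSubgroup.closure ({a, c} : Set (ZMod m)) := by
      have h1 : DihedralGroup.r 1 ∈ S (AddSubgroup.closure {a, c}) i0 :=
        hsub (hgen ▸ Subgroup.mem_top _)
      rcases mem_S.mp h1 with ⟨u, hu, h⟩ | ⟨u, hu, h⟩
      · have : (1 : ZMod m) = u := by injection h
        rwa [this]
      · exact absurd h (by simp)
    obtain ⟨k, l, hkl⟩ := AddSubgroup.mem_closure_pair.mp h1A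
    have h2c : l • c + l • c = 0 := by
      rw [← smul_add, hcc, smul_zero]
    have h2A0 : (2 : ZMod m) ∈ AddSubgroup.zmultiples a := by
      refine AddSubgroup.mem_zmultiples_iff.mpr ⟨2 * k, ?_⟩
      have hka : k • a = 1 - l • c := eq_sub_of_add_eq hkl
      rw [mul_smul, two_zsmul, hka]
      linear_combination -h2c
    -- the order computation
    have hord2 : addOrderOf (2 : ZMod m) = m / 2 := by
      have hcast : ((2 : ℕ) : ZMod m) = (2 : ZMod m) := by norm_cast
      rw [← hcast, ZMod.addOrderOf_coe 2 hm0, Nat.gcd_comm, Nat.gcd_eq_left hm2dvd]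
    have hZ2le : AddSubgroup.zmultiples (2 : ZMod m) ≤ AddSubgroup.zmultiples a :=
      AddSubgroup.zmultiples_le.mpr h2A0
    have hd1 : (m / 2) ∣ Nat.card (AddSubgroup.zmultiples a) := by
      have h := AddSubgroup.card_dvd_of_le hZ2le
      rwa [Nat.card_zmultiples, hord2] at h
    have hd2 : Nat.card (AddSubgroup.zmultiples a) ∣ m := by
      have h := AddSubgroup.card_addSubgroup_dvd_card (AddSubgroup.zmultiples a)
      rwa [Nat.card_zmod] at h
    have hne : Nat.card (AddSubgroup.zmultiples a) ≠ m := by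
      intro h
      have htop : AddSubgroup.zmultiples a = ⊤ :=
        AddSubgroup.eq_top_of_card_eq _ (by rw [h, Nat.card_zmod])
      exact hcA0 (htop ▸ AddSubgroup.mem_top c)
    have hmul : (m / 2) * 2 = m := Nat.div_mul_cancel hm2dvd
    have hpos : 0 < m / 2 := by omega
    have hcard : Nat.card (AddSubgroup.zmultiples a) = m / 2 := by
      obtain ⟨t, ht⟩ := hd1
      have ht2 : t ∣ 2 := by
        have hh : (m / 2) * t ∣ (m / 2) * 2 := by rw [hmul, ← ht]; exact hd2
        exact (Nat.mul_dvd_mul_iff_left hpos).mp hh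
      rcases (Nat.prime_two.eq_one_or_self_of_dvd t ht2) with rfl | rfl
      · simpa using ht
      · rw [ht, hmul] at hne
        exact absurd rfl hne
    have hao : addOrderOf a = m / 2 := by
      rw [← Nat.card_zmultiples]; exact hcard
    have hA0eq : AddSubgroup.zmultiples a = AddSubgroup.zmultiples (2 : ZMod m) := by
      refine (AddSubgroup.eq_of_le_of_card_ge hZ2le ?_).symm
      rw [hcard, Nat.card_zmultiples, hord2]
    -- oddness of m / 2
    have hodd : Odd (m / 2) := by
      by_contra hodd
      rw [Nat.not_odd_iff_even] at hodd
      obtain ⟨t, ht⟩ := hodd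
      have hcval : (m : ℕ) ∣ 2 * c.val := by
        have hz : ((2 * c.val : ℕ) : ZMod m) = 0 := by
          push_cast
          rw [ZMod.natCast_zmod_val]
          linear_combination hcc
        exact (ZMod.natCast_eq_zero_iff _ _).mp hz
      have hvlt := ZMod.val_lt c
      have hv0 : c.val ≠ 0 := fun h => hc0 ((ZMod.val_eq_zero c).mp h)
      have hceq : c.val = m / 2 := by
        obtain ⟨s, hs⟩ := hcval
        have hslt : s < 2 := by
          by_contra hs2
          push_neg at hs2
          have hle : m * 2 ≤ m * s := Nat.mul_le_mul (le_refl m) hs2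
          omega
        interval_cases s <;> omega
      apply hcA0
      rw [hA0eq]
      have h2' : ((t : ℤ)) • (2 : ZMod m) = ((t + t : ℕ) : ZMod m) := by
        rw [zsmul_eq_mul]
        push_cast
        ring
      exact AddSubgroup.mem_zmultiples_iff.mpr
        ⟨(t : ℤ), by rw [h2', ← ht, ← hceq, ZMod.natCast_zmod_val]⟩
    -- order of the product
    have hordra : orderOf (DihedralGroup.sr i0 * DihedralGroup.sr j0) = m / 2 := by
      rw [hra, DihedralGroup.orderOf_r]
      have hx : addOrderOf a = m / Nat.gcd m a.val := by
        conv_lhs => rw [← ZMod.natCast_zmod_val a]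
        exact ZMod.addOrderOf_coe a.val hm0
      rw [← hx, hao]
    -- the homomorphism from DihedralGroup (m/2)
    have hsmul : (zmultiplesHom (ZMod m) a) ((m / 2 : ℕ) : ℤ) = 0 := by
      rw [zmultiplesHom_apply, natCast_zsmul]
      exact addOrderOf_dvd_iff_nsmul_eq_zero.mp (hao ▸ dvd_refl _)
    set α := ZMod.lift (m / 2) ⟨zmultiplesHom (ZMod m) a, hsmul⟩ with hαdef
    have hαval : ∀ t : ZMod (m / 2), α t = (t.val : ℤ) • a := by
      intro t
      have h1 : ((t.val : ℤ) : ZMod (m / 2)) = t := by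
        push_cast
        exact ZMod.natCast_zmod_val t
      conv_lhs => rw [← h1]
      rw [hαdef, ZMod.lift_coe, zmultiplesHom_apply]
    have hα1 : α 1 = a := by
      have h1 : ((1 : ℤ) : ZMod (m / 2)) = 1 := by norm_cast
      rw [← h1, hαdef, ZMod.lift_coe, zmultiplesHom_apply, one_smul]
    have hinj : Function.Injective (psi α i0) := by
      rw [injective_iff_map_eq_one]
      rintro (t | t) h
      · rw [psi_r, DihedralGroup.one_def] at h
        have ht : α t = 0 := by injection h
        rw [hαval, natCast_zsmul] at ht
        have hdvd := addOrderOf_dvd_iff_nsmul_eq_zero.mpr ht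
        rw [hao] at hdvd
        have hv := Nat.eq_zero_of_dvd_of_lt hdvd (ZMod.val_lt t)
        rw [DihedralGroup.one_def]
        congr 1
        exact (ZMod.val_eq_zero t).mp hv
      · rw [psi_sr, DihedralGroup.one_def] at h
        exact absurd h (by intro h'; injection h')
    have hrange : (psi α i0).range =
        Subgroup.closure ({DihedralGroup.sr i0, DihedralGroup.sr j0} :
          Set (DihedralGroup m)) := by
      apply le_antisymm
      · intro x hx
        obtain ⟨y, rfl⟩ := MonoidHom.mem_range.mp hx
        obtain t | t := y
        · rw [psi_r]
          exact hrmem' _ (by rw [hαval]; exact AddSubgroup.mem_zmultiples_iff.mpr ⟨_, rfl⟩)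
        · rw [psi_sr, ← DihedralGroup.sr_mul_r]
          exact mul_mem (Subgroup.subset_closure (by simp))
            (hrmem' _ (by rw [hαval]; exact AddSubgroup.mem_zmultiples_iff.mpr ⟨_, rfl⟩))
      · rw [Subgroup.closure_le]
        intro x hx
        simp only [Set.mem_insert_iff, Set.mem_singleton_iff] at hx
        rcases hx with rfl | rfl
        · exact MonoidHom.mem_range.mpr
            ⟨DihedralGroup.sr 0, by rw [psi_sr, map_zero, add_zero]⟩
        · exact MonoidHom.mem_range.mpr
            ⟨DihedralGroup.sr 1, by rw [psi_sr, hα1]; congr 1; ring⟩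
    have eD : DihedralGroup (m / 2) ≃*
        ↥(Subgroup.closure ({DihedralGroup.sr i0, DihedralGroup.sr j0} :
          Set (DihedralGroup m))) :=
      (MonoidHom.ofInjective hinj).trans (MulEquiv.subgroupCongr hrange)
    have hcardD : Nat.card
        ↥(Subgroup.closure ({DihedralGroup.sr i0, DihedralGroup.sr j0} :
          Set (DihedralGroup m))) = m := by
      rw [← Nat.card_congr eD.toEquiv, DihedralGroup.nat_card]
      omega
    -- the central subgroup generated by z
    have hZle : Subgroup.closure ({DihedralGroup.r c} : Set (DihedralGroup m)) ≤
        Subgroup.center (DihedralGroup m) := by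
      rw [Subgroup.closure_le, Set.singleton_subset_iff]
      exact hzc
    have hZmem : ∀ w : DihedralGroup m,
        w ∈ Subgroup.closure ({DihedralGroup.r c} : Set (DihedralGroup m)) →
          w = 1 ∨ w = DihedralGroup.r c := by
      intro w hw
      rw [← Subgroup.zpowers_eq_closure] at hw
      obtain ⟨k, hk⟩ := Subgroup.mem_zpowers_iff.mp hw
      have h2 := zpow_mod_orderOf (DihedralGroup.r c) k
      rw [hz2] at h2
      have hk01 : k % ((2 : ℕ) : ℤ) = 0 ∨ k % ((2 : ℕ) : ℤ) = 1 := by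
        push_cast
        omega
      rcases hk01 with h | h
      · left; rw [← hk, ← h2, h, zpow_zero]
      · right; rw [← hk, ← h2, h, zpow_one]
    have hcomm : ∀ (d : ↥(Subgroup.closure
          ({DihedralGroup.sr i0, DihedralGroup.sr j0} : Set (DihedralGroup m))))
        (w : ↥(Subgroup.closure ({DihedralGroup.r c} : Set (DihedralGroup m)))),
        Commute ((Subgroup.closure _).subtype d) ((Subgroup.closure _).subtype w) := by
      intro d w
      exact Subgroup.mem_center_iff.mp (hZle w.2) d
    set φ := MonoidHom.noncommCoprod
      (Subgroup.closure ({DihedralGroup.sr i0, DihedralGroup.sr j0} :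
        Set (DihedralGroup m))).subtype
      (Subgroup.closure ({DihedralGroup.r c} : Set (DihedralGroup m))).subtype
      hcomm with hφdef
    have hφapp : ∀ d w, φ (d, w) = (d : DihedralGroup m) * (w : DihedralGroup m) :=
      fun d w => rfl
    have hφinj : Function.Injective φ := by
      rw [injective_iff_map_eq_one]
      rintro ⟨d, w⟩ h
      rw [hφapp] at h
      rcases hZmem w w.2 with hw | hw
      · have hd : (d : DihedralGroup m) = 1 := by rwa [hw, mul_one] at h
        refine Prod.ext (Subtype.ext hd) (Subtype.ext hw)
      · exfalso
        apply hznotin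
        rw [← hw, ← inv_eq_of_mul_eq_one_right h]
        exact inv_mem d.2
    have hφsurj : Function.Surjective φ := by
      rw [← MonoidHom.range_eq_top, eq_top_iff, ← hgen, Subgroup.closure_le]
      intro x hx
      simp only [Set.mem_insert_iff, Set.mem_singleton_iff] at hx
      rcases hx with rfl | rfl | rfl
      · exact MonoidHom.mem_range.mpr
          ⟨(⟨DihedralGroup.sr i0, Subgroup.subset_closure (by simp)⟩, 1),
            by rw [hφapp]; simp⟩
      · exact MonoidHom.mem_range.mpr
          ⟨(⟨DihedralGroup.sr j0, Subgroup.subset_closure (by simp)⟩, 1),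
            by rw [hφapp]; simp⟩
      · exact MonoidHom.mem_range.mpr
          ⟨(1, ⟨DihedralGroup.r c, Subgroup.subset_closure rfl⟩),
            by rw [hφapp]; simp⟩
    exact ⟨⟨(MulEquiv.ofBijective φ ⟨hφinj, hφsurj⟩).symm⟩, hcardD, ⟨eD.symm⟩, hordra, hodd⟩
  · -- z = sr c : impossible
    exfalso
    have h := Subgroup.mem_center_iff.mp hzc (DihedralGroup.r 1)
    rw [DihedralGroup.r_mul_sr, DihedralGroup.sr_mul_r] at h
    have h2 : c - 1 = c + 1 := by injection h
    have h20 : ((2 : ℕ) : ZMod m) = 0 := by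
      push_cast
      linear_combination -h2
    have hdvd : m ∣ 2 := (ZMod.natCast_eq_zero_iff 2 m).mp h20
    have hm2 : m = 2 := by
      obtain ⟨t, ht⟩ := hm
      rcases (Nat.prime_two.eq_one_or_self_of_dvd m hdvd) with h | h <;> omega
    subst hm2
    have hr1c : DihedralGroup.r 1 = DihedralGroup.sr c :=
      huniq _ (Subgroup.mem_center_iff.mpr (by decide)) DihedralGroup.orderOf_r_one
    exact absurd hr1c (by simp)
end

section
/- With Δ as above and 0 < b < a, the subgroup N = ⟨(R0P2)^a, (R0P2)^b (R2P0)^c⟩ (c > 0) is normal in Δ if and only if a = 2b. -/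
/-- The colour-preserving automorphism group Δ of the alternate-edge-coloured
square grid, i.e. ℤ² ⋊ (C₂ × C₂) with the coordinatewise sign action, realized
concretely as the direct product of two infinite dihedral groups. -/
abbrev Delta : Type := DihedralGroup 0 × DihedralGroup 0

def R0 : Delta := (DihedralGroup.sr 0, 1)
def P2 : Delta := (DihedralGroup.sr 1, 1)
def R2 : Delta := (1, DihedralGroup.sr 0)
def P0 : Delta := (1, DihedralGroup.sr 1)


open DihedralGroup in
lemma r_mul_r' (i j : ℤ) : (r i : DihedralGroup 0) * r j = r (i + j) := rfl

open DihedralGroup in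
lemma sr_mul_r' (i j : ℤ) : (sr i : DihedralGroup 0) * r j = sr (i + j) := rfl

open DihedralGroup in
lemma sr_mul_sr' (i j : ℤ) : (sr i : DihedralGroup 0) * sr j = r (j - i) := rfl

open DihedralGroup in
lemma r_injEq' (i j : ℤ) : ((r i : DihedralGroup 0) = r j) = (i = j) :=
  propext ⟨fun h => r.inj h, fun h => h ▸ rfl⟩

open DihedralGroup in
lemma r_inv' (x : ℤ) : (r x : DihedralGroup 0)⁻¹ = r (-x) := rfl

open DihedralGroup in
lemma sr_inv' (x : ℤ) : (sr x : DihedralGroup 0)⁻¹ = sr x := rfl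

open DihedralGroup in
lemma r_zpow' (m : ℤ) (x : ℤ) : (r x : DihedralGroup 0) ^ m = r (m * x) := by
  have hn : ∀ k : ℕ, (r x : DihedralGroup 0) ^ k = r ((k : ℤ) * x) := by
    intro k
    induction k with
    | zero => simp only [pow_zero, Nat.cast_zero, zero_mul]; rfl
    | succ k ih => rw [pow_succ, ih, r_mul_r', r_injEq']; push_cast; ring
  cases m with
  | ofNat k => simpa using hn k
  | negSucc k =>
      rw [zpow_negSucc, hn, r_inv', r_injEq']
      simp [Int.negSucc_eq]
      ring

open DihedralGroup in
lemma conj_r (g : DihedralGroup 0) (u : ℤ) :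
    g * r u * g⁻¹ = r u ∨ g * r u * g⁻¹ = r (-u) := by
  rcases g with ⟨(i : ℤ)⟩ | ⟨(i : ℤ)⟩
  · left; rw [r_mul_r', r_inv', r_mul_r', r_injEq']; ring
  · right; rw [sr_mul_r', sr_inv', sr_mul_sr', r_injEq']; ring

open DihedralGroup in
/-- The lattice subgroup generated by (a,0) and (b,c), as a subgroup of Δ. -/
def Hsub (a b c : ℤ) : Subgroup Delta where
  carrier := {p | ∃ m n : ℤ, p = (r (m * a + n * b), r (n * c))}
  one_mem' := ⟨0, 0, by norm_num [one_def]; rfl⟩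
  mul_mem' := by
    rintro p q ⟨m, n, rfl⟩ ⟨m', n', rfl⟩
    exact ⟨m + m', n + n', by
      simp only [Prod.mk_mul_mk, r_mul_r', Prod.mk.injEq, r_injEq']
      constructor <;> ring⟩
  inv_mem' := by
    rintro p ⟨m, n, rfl⟩
    exact ⟨-m, -n, by
      simp only [Prod.inv_mk, r_inv', Prod.mk.injEq, DihedralGroup.r.injEq]
      constructor <;> ring⟩

open DihedralGroup in
lemma mem_Hsub {a b c : ℤ} {p : Delta} :
    p ∈ Hsub a b c ↔ ∃ m n : ℤ, p = (r (m * a + n * b), r (n * c)) := Iff.rfl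

open DihedralGroup in
lemma closure_eq_Hsub (a b c : ℕ) :
    Subgroup.closure ({(R0 * P2) ^ a, (R0 * P2) ^ b * (R2 * P0) ^ c} : Set Delta)
      = Hsub a b c := by
  have hT1 : (R0 * P2) = ((r 1, 1) : Delta) := by
    simp [R0, P2, Prod.mk_mul_mk, sr_mul_sr]
  have hT2 : (R2 * P0) = ((1, r 1) : Delta) := by
    simp [R2, P0, Prod.mk_mul_mk, sr_mul_sr]
  have hg1 : (R0 * P2) ^ a = ((r a, 1) : Delta) := by
    rw [hT1, Prod.pow_mk, one_pow, r_pow, one_mul]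
  have hg2 : (R0 * P2) ^ b * (R2 * P0) ^ c = ((r b, r c) : Delta) := by
    rw [hT1, hT2, Prod.pow_mk, Prod.pow_mk, Prod.mk_mul_mk, one_pow, one_pow,
      one_mul, mul_one, r_pow, r_pow, one_mul, one_mul]
  apply le_antisymm
  · rw [Subgroup.closure_le]
    rintro p (rfl | rfl)
    · exact ⟨1, 0, by rw [hg1]; norm_num; exact ⟨rfl, rfl⟩⟩
    · exact ⟨0, 1, by rw [hg2]; norm_num; exact ⟨rfl, rfl⟩⟩
  · rintro p ⟨m, n, rfl⟩
    have h1 : ((R0 * P2) ^ a) ^ m ∈ Subgroup.closure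
        ({(R0 * P2) ^ a, (R0 * P2) ^ b * (R2 * P0) ^ c} : Set Delta) :=
      Subgroup.zpow_mem _ (Subgroup.subset_closure (Set.mem_insert _ _)) m
    have h2 : ((R0 * P2) ^ b * (R2 * P0) ^ c) ^ n ∈ Subgroup.closure
        ({(R0 * P2) ^ a, (R0 * P2) ^ b * (R2 * P0) ^ c} : Set Delta) :=
      Subgroup.zpow_mem _ (Subgroup.subset_closure
        (Set.mem_insert_of_mem _ (Set.mem_singleton _))) n
    have key : ((R0 * P2) ^ a) ^ m * ((R0 * P2) ^ b * (R2 * P0) ^ c) ^ n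
        = ((r (m * (a : ℤ) + n * (b : ℤ)), r (n * (c : ℤ))) : Delta) := by
      rw [hg1, hg2, Prod.pow_mk, Prod.pow_mk, Prod.mk_mul_mk, one_zpow,
        one_mul, r_zpow, r_zpow, r_zpow, r_mul_r]
      show ((r (((a : ℤ) * m + b * n : ℤ)), r (((c : ℤ) * n : ℤ))) : Delta) = _
      rw [Prod.mk.injEq, r_injEq', r_injEq']; constructor <;> ring
    exact key ▸ Subgroup.mul_mem _ h1 h2

/-- With T1 = R0P2 and T2 = R2P0 the two unit translations and 0 < b < a,
c > 0, the subgroup N = ⟨T1^a, T1^b T2^c⟩ is normal in Δ iff a = 2b. -/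
theorem stmt16 (a b c : ℕ) (hb : 0 < b) (hba : b < a) (hc : 0 < c) :
    (Subgroup.closure
      ({(R0 * P2) ^ a, (R0 * P2) ^ b * (R2 * P0) ^ c} : Set Delta)).Normal ↔
      a = 2 * b := by
  rw [closure_eq_Hsub]
  constructor
  · intro h
    have hmem : ((DihedralGroup.r b, DihedralGroup.r c) : Delta) ∈ Hsub a b c :=
      ⟨0, 1, by norm_num; exact ⟨rfl, rfl⟩⟩
    have hconj := h.conj_mem _ hmem ((1, DihedralGroup.sr 0) : Delta)
    have : ((1, DihedralGroup.sr 0) : Delta) * (DihedralGroup.r b, DihedralGroup.r c) *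
        ((1, DihedralGroup.sr 0) : Delta)⁻¹ =
        ((DihedralGroup.r b, DihedralGroup.r (-(c : ℤ))) : Delta) := by
      simp only [Prod.inv_mk, Prod.mk_mul_mk, one_mul, inv_one, mul_one,
        sr_inv', DihedralGroup.sr_mul_r, DihedralGroup.sr_mul_sr]
      norm_num; rfl
    rw [this] at hconj
    obtain ⟨m, n, hmn⟩ := hconj
    replace hmn : (b : ℤ) = m * a + n * b ∧ -(c : ℤ) = n * c :=
      ⟨DihedralGroup.r.inj (Prod.mk.inj hmn).1, DihedralGroup.r.inj (Prod.mk.inj hmn).2⟩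
    obtain ⟨h1, h2⟩ := hmn
    have hcZ : (0 : ℤ) < c := by exact_mod_cast hc
    have hn : n = -1 := by
      rcases lt_trichotomy n (-1) with h | h | h
      · nlinarith
      · exact h
      · nlinarith
    subst hn
    have hma : m * (a : ℤ) = 2 * b := by linarith
    have hbZ : (0 : ℤ) < b := by exact_mod_cast hb
    have hbaZ : (b : ℤ) < a := by exact_mod_cast hba
    have hm : m = 1 := by
      rcases lt_trichotomy m 1 with h | h | h
      · nlinarith
      · exact h
      · nlinarith
    rw [hm, one_mul] at hma
    exact_mod_cast hma
  · intro ha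
    subst ha
    constructor
    rintro p ⟨m, n, rfl⟩ g
    obtain ⟨g1, g2⟩ := g
    have e1 := conj_r g1 (m * ((2 * b : ℕ) : ℤ) + n * (b : ℤ))
    have e2 := conj_r g2 (n * (c : ℤ))
    have hprod : (g1, g2) * ((DihedralGroup.r (m * ((2 * b : ℕ) : ℤ) + n * (b : ℤ)),
        DihedralGroup.r (n * (c : ℤ))) : Delta) * (g1, g2)⁻¹ =
        (g1 * DihedralGroup.r (m * ((2 * b : ℕ) : ℤ) + n * (b : ℤ)) * g1⁻¹,
         g2 * DihedralGroup.r (n * (c : ℤ)) * g2⁻¹) := by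
      rw [Prod.inv_mk, Prod.mk_mul_mk, Prod.mk_mul_mk]
    rw [hprod]
    rcases e1 with e1 | e1 <;> rcases e2 with e2 | e2 <;> rw [e1, e2]
    · exact ⟨m, n, rfl⟩
    · exact ⟨m + n, -n, by
        simp only [Prod.mk.injEq, r_injEq']
        push_cast
        constructor <;> ring⟩
    · exact ⟨-(m + n), n, by
        simp only [Prod.mk.injEq, r_injEq']
        push_cast
        exact ⟨by ring, trivial⟩⟩
    · exact ⟨-m, -n, by
        simp only [Prod.mk.injEq, r_injEq']
        push_cast
        constructor <;> ring⟩
end
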